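/- Suppose q is not a root of unity. If n is even, then the quantum torus T_n^q is a simple ring. -/

import Mathlib

noncomputable section

open FreeAlgebra

/-- The scalars `q_{ij}` (0-based indices; the corresponding 1-based indices are
`i+1`, `j+1`): `q_{ij} = q` if `j` is even and `i` is odd (1-based), `q_{ij} = 1`
if `j` is odd or both are even, and `q_{ji} = q_{ij}⁻¹`, `q_{ii} = 1`. -/
def qTor {K : Type} [Field K] (q : K) (n : ℕ) (i j : Fin n) : K :=
  if i.1 < j.1 then (if Even (j.1 + 1) ∧ Odd (i.1 + 1) then q else 1)
  else if j.1 < i.1 then (if Even (i.1 + 1) ∧ Odd (j.1 + 1) then q⁻¹ else 1)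
  else 1

/-- The defining relations of the quantum torus `T_n^q`: generators
`z_1,…,z_n` (`Sum.inl`) and their inverses (`Sum.inr`), with
`z_i z_i⁻¹ = z_i⁻¹ z_i = 1` and `z_i z_j = q_{ij} z_j z_i`. -/
inductive TorRel (K : Type) [Field K] (n : ℕ) (q : K) :
    FreeAlgebra K (Fin n ⊕ Fin n) → FreeAlgebra K (Fin n ⊕ Fin n) → Prop
  | inv_right (i : Fin n) :
      TorRel K n q (ι K (Sum.inl i) * ι K (Sum.inr i)) 1
  | inv_left (i : Fin n) :
      TorRel K n q (ι K (Sum.inr i) * ι K (Sum.inl i)) 1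
  | comm (i j : Fin n) :
      TorRel K n q (ι K (Sum.inl i) * ι K (Sum.inl j))
        (qTor q n i j • (ι K (Sum.inl j) * ι K (Sum.inl i)))

/-- The quantum torus `T_n^q`. -/
abbrev QTorus (K : Type) [Field K] (n : ℕ) (q : K) := RingQuot (TorRel K n q)

namespace QT

variable {K : Type} [Field K] {n : ℕ} (q : K)

/-- integer exponent with `qTor q n i j = q ^ Eexp n i j`. -/
def Eexp (n : ℕ) (i j : Fin n) : ℤ :=
  if i.1 < j.1 then (if Even (j.1 + 1) ∧ Odd (i.1 + 1) then 1 else 0)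
  else if j.1 < i.1 then (if Even (i.1 + 1) ∧ Odd (j.1 + 1) then -1 else 0)
  else 0

lemma qTor_eq (i j : Fin n) : qTor q n i j = q ^ Eexp n i j := by
  unfold qTor Eexp
  split_ifs <;> simp

lemma qTor_ne_zero (hq0 : q ≠ 0) (i j : Fin n) : qTor q n i j ≠ 0 := by
  rw [qTor_eq]; exact zpow_ne_zero _ hq0

lemma zpow_eq_one (hq0 : q ≠ 0) (hq : ∀ k : ℕ, 0 < k → q ^ k ≠ 1) :
    ∀ m : ℤ, q ^ m = 1 → m = 0 := by
  intro m h
  rcases lt_trichotomy m 0 with hm | hm | hm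
  · exfalso
    apply hq m.natAbs (by omega)
    have e : (m.natAbs : ℤ) = -m := by omega
    have : q ^ (m.natAbs : ℤ) = 1 := by rw [e, zpow_neg, h, inv_one]
    rwa [zpow_natCast] at this
  · exact hm
  · exfalso
    apply hq m.natAbs (by omega)
    have e : (m.natAbs : ℤ) = m := by omega
    have : q ^ (m.natAbs : ℤ) = 1 := by rw [e]; exact h
    rwa [zpow_natCast] at this

lemma zpow_inj (hq0 : q ≠ 0) (hq : ∀ k : ℕ, 0 < k → q ^ k ≠ 1) {a b : ℤ}
    (h : q ^ a = q ^ b) : a = b := by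
  have : q ^ (a - b) = 1 := by
    rw [zpow_sub₀ hq0, h, div_self (zpow_ne_zero _ hq0)]
  have := zpow_eq_one q hq0 hq _ this
  omega

/-- the generators as units of the quantum torus. -/
def U (i : Fin n) : (QTorus K n q)ˣ where
  val := RingQuot.mkAlgHom K (TorRel K n q) (ι K (Sum.inl i))
  inv := RingQuot.mkAlgHom K (TorRel K n q) (ι K (Sum.inr i))
  val_inv := by
    rw [← map_mul, ← map_one (RingQuot.mkAlgHom K (TorRel K n q))]
    exact RingQuot.mkAlgHom_rel K (TorRel.inv_right i)
  inv_val := by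
    rw [← map_mul, ← map_one (RingQuot.mkAlgHom K (TorRel K n q))]
    exact RingQuot.mkAlgHom_rel K (TorRel.inv_left i)

lemma U_comm (i j : Fin n) :
    (U q i : QTorus K n q) * U q j = qTor q n i j • ((U q j : QTorus K n q) * U q i) := by
  show RingQuot.mkAlgHom K (TorRel K n q) (ι K (Sum.inl i)) *
      RingQuot.mkAlgHom K (TorRel K n q) (ι K (Sum.inl j)) =
    qTor q n i j • (RingQuot.mkAlgHom K (TorRel K n q) (ι K (Sum.inl j)) *
      RingQuot.mkAlgHom K (TorRel K n q) (ι K (Sum.inl i)))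
  rw [← map_mul, ← map_mul, ← map_smul]
  exact RingQuot.mkAlgHom_rel K (TorRel.comm i j)

section general
variable {A : Type} [Ring A] [Algebra K A]

lemma single_zpow (x y : Aˣ) (s : K) (hs : s ≠ 0)
    (h : (x : A) * y = s • ((y : A) * x)) :
    ∀ k : ℤ, (x : A) * ↑(y ^ k) = s ^ k • (↑(y ^ k) * (x : A)) := by
  have h2 : (x : A) = s • ((y : A) * x) * ↑y⁻¹ := by
    rw [← h, mul_assoc, Units.mul_inv, mul_one]
  have hinv : (x : A) * ↑y⁻¹ = s⁻¹ • (↑y⁻¹ * (x : A)) := by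
    have h3 : (↑y⁻¹ : A) * x = s • ((x : A) * ↑y⁻¹) := by
      calc (↑y⁻¹ : A) * x = ↑y⁻¹ * (s • ((y : A) * x) * ↑y⁻¹) := by rw [← h2]
      _ = (↑y⁻¹ * (s • ((y : A) * x))) * ↑y⁻¹ := by rw [mul_assoc]
      _ = (s • (↑y⁻¹ * ((y : A) * x))) * ↑y⁻¹ := by rw [mul_smul_comm]
      _ = (s • ((x : A))) * ↑y⁻¹ := by rw [← mul_assoc, Units.inv_mul, one_mul]
      _ = s • ((x : A) * ↑y⁻¹) := by rw [smul_mul_assoc]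
    rw [h3, smul_smul, inv_mul_cancel₀ hs, one_smul]
  intro k
  induction k using Int.induction_on with
  | zero => simp
  | succ k ih =>
      rw [zpow_add_one y (k : ℤ), Units.val_mul, ← mul_assoc, ih, smul_mul_assoc,
        mul_assoc, h, mul_smul_comm, smul_smul, ← zpow_add_one₀ hs, mul_assoc]
  | pred k ih =>
      rw [zpow_sub_one y (-(k : ℤ)), Units.val_mul, ← mul_assoc, ih, smul_mul_assoc,
        mul_assoc, hinv, mul_smul_comm, smul_smul, ← zpow_sub_one₀ hs, mul_assoc]

lemma zpow_zpow (x y : Aˣ) (s : K) (hs : s ≠ 0)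
    (h : (x : A) * y = s • ((y : A) * x)) (m k : ℤ) :
    (↑(x ^ m) : A) * ↑(y ^ k) = s ^ (m * k) • (↑(y ^ k) * (↑(x ^ m) : A)) := by
  have h1 := single_zpow x y s hs h k
  have h2 : (↑(y ^ k) : A) * x = (s ^ k)⁻¹ • ((x : A) * ↑(y ^ k)) := by
    rw [h1, smul_smul, inv_mul_cancel₀ (zpow_ne_zero _ hs), one_smul]
  have hc : ((s ^ k)⁻¹ : K) ≠ 0 := inv_ne_zero (zpow_ne_zero _ hs)
  have h3 := single_zpow (y ^ k) x ((s ^ k)⁻¹) hc h2 m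
  have hcm : (((s ^ k)⁻¹ : K) ^ m)⁻¹ = s ^ (m * k) := by
    rw [← zpow_neg s k, ← zpow_mul, ← zpow_neg]
    ring_nf
  calc (↑(x ^ m) : A) * ↑(y ^ k)
      = (((s ^ k)⁻¹ ^ m)⁻¹ : K) • (((s ^ k)⁻¹ ^ m : K) • ((↑(x ^ m) : A) * ↑(y ^ k))) := by
        rw [smul_smul, inv_mul_cancel₀ (zpow_ne_zero _ hc), one_smul]
  _ = (((s ^ k)⁻¹ ^ m)⁻¹ : K) • (↑(y ^ k) * (↑(x ^ m) : A)) := by rw [← h3]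
  _ = s ^ (m * k) • (↑(y ^ k) * (↑(x ^ m) : A)) := by rw [hcm]

end general

section monomials
variable (q : K)

/-- ordered monomial (as a unit) over an index list -/
def Zu (L : List (Fin n)) (a : Fin n → ℤ) : (QTorus K n q)ˣ :=
  (L.map fun j => U q j ^ a j).prod

lemma Zu_nil (a : Fin n → ℤ) : Zu q [] a = 1 := rfl

lemma Zu_cons (j : Fin n) (L : List (Fin n)) (a : Fin n → ℤ) :
    Zu q (j :: L) a = U q j ^ a j * Zu q L a := by
  simp [Zu]

lemma Zu_zero : ∀ L : List (Fin n), Zu q L 0 = 1 := by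
  intro L
  induction L with
  | nil => rfl
  | cons j L ih => rw [Zu_cons, ih, Pi.zero_apply, zpow_zero, one_mul]

lemma Zu_single_not_mem (i : Fin n) (k : ℤ) :
    ∀ L : List (Fin n), i ∉ L → Zu q L (Pi.single i k) = 1 := by
  intro L
  induction L with
  | nil => intro _; rfl
  | cons j L ih =>
      intro hmem
      have hne : j ≠ i := by rintro rfl; exact hmem List.mem_cons_self
      rw [Zu_cons, ih (fun h => hmem (List.mem_cons_of_mem _ h)),
        Pi.single_eq_of_ne hne, zpow_zero, one_mul]

lemma Zu_single (i : Fin n) (k : ℤ) :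
    ∀ L : List (Fin n), L.Nodup → i ∈ L → Zu q L (Pi.single i k) = U q i ^ k := by
  intro L
  induction L with
  | nil => intro _ h; simp at h
  | cons j L ih =>
      intro hnd hmem
      rcases List.mem_cons.mp hmem with h | h
      · subst h
        rw [Zu_cons, Pi.single_eq_same, Zu_single_not_mem q i k L (List.nodup_cons.mp hnd).1,
          mul_one]
      · have hne : j ≠ i := by
          rintro rfl; exact (List.nodup_cons.mp hnd).1 h
        rw [Zu_cons, Pi.single_eq_of_ne hne, zpow_zero, one_mul,
          ih (List.nodup_cons.mp hnd).2 h]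

/-- the conjugation exponent row sum -/
def row (k : Fin n) (L : List (Fin n)) (a : Fin n → ℤ) : ℤ :=
  (L.map fun j => Eexp n k j * a j).sum

lemma row_nil (k : Fin n) (a : Fin n → ℤ) : row k [] a = 0 := rfl

lemma row_cons (k j : Fin n) (L : List (Fin n)) (a : Fin n → ℤ) :
    row k (j :: L) a = Eexp n k j * a j + row k L a := by
  simp [row]

lemma U_swap (hq0 : q ≠ 0) (k : Fin n) :
    ∀ (L : List (Fin n)) (a : Fin n → ℤ),
      (↑(U q k) : QTorus K n q) * ↑(Zu q L a) =
        q ^ row k L a • (↑(Zu q L a) * ↑(U q k)) := by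
  intro L
  induction L with
  | nil => intro a; simp [Zu_nil, row_nil]
  | cons j L ih =>
      intro a
      have h1 : (↑(U q k) : QTorus K n q) * ↑(U q j ^ a j) =
          q ^ (Eexp n k j * a j) • (↑(U q j ^ a j) * ↑(U q k)) := by
        have := single_zpow (U q k) (U q j) (qTor q n k j) (qTor_ne_zero q hq0 k j)
          (U_comm q k j) (a j)
        rwa [qTor_eq, ← zpow_mul] at this
      rw [Zu_cons, Units.val_mul, ← mul_assoc, h1, smul_mul_assoc, mul_assoc, ih,
        mul_smul_comm, smul_smul, ← zpow_add₀ hq0, ← row_cons, mul_assoc]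

lemma Zu_swap_right (hq0 : q ≠ 0) (i : Fin n) (m : ℤ) :
    ∀ (L : List (Fin n)) (a : Fin n → ℤ), ∃ s : K, s ≠ 0 ∧
      (↑(Zu q L a) : QTorus K n q) * ↑(U q i ^ m) =
        s • (↑(U q i ^ m) * ↑(Zu q L a)) := by
  intro L
  induction L with
  | nil => intro a; exact ⟨1, one_ne_zero, by simp [Zu_nil]⟩
  | cons j L ih =>
      intro a
      obtain ⟨s, hs, h⟩ := ih a
      have h1 : (↑(U q j ^ a j) : QTorus K n q) * ↑(U q i ^ m) =
          q ^ (Eexp n j i * (a j * m)) • (↑(U q i ^ m) * ↑(U q j ^ a j)) := by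
        have := zpow_zpow (U q j) (U q i) (qTor q n j i) (qTor_ne_zero q hq0 j i)
          (U_comm q j i) (a j) m
        rwa [qTor_eq, ← zpow_mul] at this
      refine ⟨q ^ (Eexp n j i * (a j * m)) * s, mul_ne_zero (zpow_ne_zero _ hq0) hs, ?_⟩
      rw [Zu_cons, Units.val_mul, mul_assoc, h, mul_smul_comm, ← mul_assoc, h1,
        smul_mul_assoc, smul_smul, mul_assoc, mul_comm s]

lemma Zu_mul (hq0 : q ≠ 0) :
    ∀ (L : List (Fin n)) (a b : Fin n → ℤ), ∃ s : K, s ≠ 0 ∧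
      (↑(Zu q L a) : QTorus K n q) * ↑(Zu q L b) = s • ↑(Zu q L (a + b)) := by
  intro L
  induction L with
  | nil => intro a b; exact ⟨1, one_ne_zero, by simp [Zu_nil]⟩
  | cons j L ih =>
      intro a b
      obtain ⟨s1, hs1, h1⟩ := Zu_swap_right q hq0 j (b j) L a
      obtain ⟨s2, hs2, h2⟩ := ih a b
      refine ⟨s1 * s2, mul_ne_zero hs1 hs2, ?_⟩
      rw [Zu_cons, Zu_cons, Zu_cons, Units.val_mul, Units.val_mul]
      calc (↑(U q j ^ a j) * ↑(Zu q L a) : QTorus K n q) * (↑(U q j ^ b j) * ↑(Zu q L b))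
          = ↑(U q j ^ a j) * (↑(Zu q L a) * ↑(U q j ^ b j)) * ↑(Zu q L b) := by
            rw [mul_assoc, mul_assoc, mul_assoc]
      _ = ↑(U q j ^ a j) * (s1 • (↑(U q j ^ b j) * ↑(Zu q L a))) * ↑(Zu q L b) := by rw [h1]
      _ = s1 • (↑(U q j ^ a j) * ↑(U q j ^ b j) * (↑(Zu q L a) * ↑(Zu q L b))) := by
            rw [mul_smul_comm, smul_mul_assoc, mul_assoc, mul_assoc, mul_assoc]
      _ = s1 • (↑(U q j ^ a j) * ↑(U q j ^ b j) * (s2 • ↑(Zu q L (a + b)))) := by rw [h2]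
      _ = (s1 * s2) • (↑(U q j ^ ((a + b) j)) * ↑(Zu q L (a + b))) := by
            rw [mul_smul_comm, smul_smul, ← Units.val_mul, ← zpow_add, Pi.add_apply]

end monomials

section representation
variable (q : K)

/-- the exponent used in the diagonal twist of the shift operators -/
def cexp (n : ℕ) (i : Fin n) (a : Fin n → ℤ) : ℤ :=
  ∑ m : Fin n, (if (i : ℕ) < (m : ℕ) then Eexp n i m else 0) * a m

lemma cexp_add (i : Fin n) (a b : Fin n → ℤ) :
    cexp n i (a + b) = cexp n i a + cexp n i b := by
  simp [cexp, mul_add, Finset.sum_add_distrib]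

lemma cexp_single (i j : Fin n) (k : ℤ) :
    cexp n i (Pi.single j k) = (if (i : ℕ) < (j : ℕ) then Eexp n i j else 0) * k := by
  unfold cexp
  rw [Finset.sum_eq_single j]
  · rw [Pi.single_eq_same]
  · intro m _ hm
    rw [Pi.single_eq_of_ne hm, mul_zero]
  · intro h; exact absurd (Finset.mem_univ j) h

lemma cexp_key (i j : Fin n) :
    cexp n i (Pi.single j 1) = Eexp n i j + cexp n j (Pi.single i 1) := by
  rw [cexp_single, cexp_single, mul_one, mul_one]
  unfold Eexp
  simp only [Nat.even_iff, Nat.odd_iff]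
  split_ifs <;> omega

/-- twisted shift operator on `(Fin n → ℤ) →₀ K` -/
def shOp (g : (Fin n → ℤ) → K) (v : Fin n → ℤ) :
    ((Fin n → ℤ) →₀ K) →ₗ[K] ((Fin n → ℤ) →₀ K) :=
  Finsupp.lift _ K _ (fun a => Finsupp.single (a + v) (g a))

lemma shOp_single (g : (Fin n → ℤ) → K) (v a : Fin n → ℤ) (c : K) :
    shOp g v (Finsupp.single a c) = Finsupp.single (a + v) (c * g a) := by
  unfold shOp
  rw [Finsupp.lift_apply, Finsupp.sum_single_index (by simp), Finsupp.smul_single,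
    smul_eq_mul]

/-- images of the generators -/
def repOp : Fin n ⊕ Fin n → Module.End K ((Fin n → ℤ) →₀ K)
  | Sum.inl i => shOp (fun a => q ^ cexp n i a) (Pi.single i 1)
  | Sum.inr i => shOp (fun a => q ^ (-cexp n i (a - Pi.single i 1))) (-(Pi.single i 1))

@[simp] lemma repOp_inl (i : Fin n) :
    repOp q (Sum.inl i) = shOp (fun a => q ^ cexp n i a) (Pi.single i 1) := rfl

@[simp] lemma repOp_inr (i : Fin n) :
    repOp q (Sum.inr i) =
      shOp (fun a => q ^ (-cexp n i (a - Pi.single i 1))) (-(Pi.single i 1)) := rfl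

/-- the representation of the quantum torus on `(Fin n → ℤ) →₀ K` -/
def rep (hq0 : q ≠ 0) : QTorus K n q →ₐ[K] Module.End K ((Fin n → ℤ) →₀ K) :=
  RingQuot.liftAlgHom K ⟨FreeAlgebra.lift K (repOp q), by
    intro x y h
    induction h with
    | inv_right i =>
        rw [map_mul, map_one, FreeAlgebra.lift_ι_apply, FreeAlgebra.lift_ι_apply,
          repOp_inl, repOp_inr]
        refine Finsupp.lhom_ext fun a c => ?_
        rw [Module.End.mul_apply, shOp_single, shOp_single, Module.End.one_apply,
          ← sub_eq_add_neg, sub_add_cancel, mul_assoc, ← zpow_add₀ hq0,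
          neg_add_cancel, zpow_zero, mul_one]
    | inv_left i =>
        rw [map_mul, map_one, FreeAlgebra.lift_ι_apply, FreeAlgebra.lift_ι_apply,
          repOp_inl, repOp_inr]
        refine Finsupp.lhom_ext fun a c => ?_
        rw [Module.End.mul_apply, shOp_single, shOp_single, Module.End.one_apply,
          add_neg_cancel_right, add_sub_cancel_right, mul_assoc,
          ← zpow_add₀ hq0, add_neg_cancel, zpow_zero, mul_one]
    | comm i j =>
        rw [map_mul, map_smul, map_mul, FreeAlgebra.lift_ι_apply, FreeAlgebra.lift_ι_apply,
          repOp_inl, repOp_inl]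
        refine Finsupp.lhom_ext fun a c => ?_
        rw [Module.End.mul_apply, LinearMap.smul_apply, Module.End.mul_apply, shOp_single,
          shOp_single, shOp_single, shOp_single, Finsupp.smul_single,
          add_right_comm a (Pi.single j 1) (Pi.single i 1)]
        congr 1
        rw [smul_eq_mul, qTor_eq, cexp_add, cexp_add, cexp_key i j]
        simp only [zpow_add₀ hq0]
        ring⟩

end representation

section action
variable (q : K) (hq0 : q ≠ 0)

lemma rep_mk (x : FreeAlgebra K (Fin n ⊕ Fin n)) :
    rep q hq0 (RingQuot.mkAlgHom K (TorRel K n q) x) = FreeAlgebra.lift K (repOp q) x := by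
  unfold rep
  exact RingQuot.liftAlgHom_mkAlgHom_apply K _ _ x

lemma rep_U (i : Fin n) (a : Fin n → ℤ) (c : K) :
    rep q hq0 (↑(U q i)) (Finsupp.single a c) =
      Finsupp.single (a + Pi.single i 1) (c * q ^ cexp n i a) := by
  show rep q hq0 (RingQuot.mkAlgHom K (TorRel K n q) (ι K (Sum.inl i))) _ = _
  rw [rep_mk, FreeAlgebra.lift_ι_apply, repOp_inl, shOp_single]

lemma rep_Uinv (i : Fin n) (a : Fin n → ℤ) (c : K) :
    rep q hq0 (↑(U q i)⁻¹) (Finsupp.single a c) =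
      Finsupp.single (a - Pi.single i 1) (c * q ^ (-cexp n i (a - Pi.single i 1))) := by
  show rep q hq0 (RingQuot.mkAlgHom K (TorRel K n q) (ι K (Sum.inr i))) _ = _
  rw [rep_mk, FreeAlgebra.lift_ι_apply, repOp_inr, shOp_single, ← sub_eq_add_neg]

lemma rep_U_zpow (i : Fin n) : ∀ (k : ℤ) (b : Fin n → ℤ) (c : K), ∃ t : K, t ≠ 0 ∧
    rep q hq0 (↑(U q i ^ k)) (Finsupp.single b c) =
      Finsupp.single (b + k • Pi.single i 1) (c * t) := by
  intro k
  induction k using Int.induction_on with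
  | zero =>
      intro b c
      refine ⟨1, one_ne_zero, ?_⟩
      rw [zpow_zero, Units.val_one, map_one, Module.End.one_apply, zero_smul, add_zero,
        mul_one]
  | succ k ih =>
      intro b c
      obtain ⟨t, ht, h⟩ := ih (b + Pi.single i 1) (c * q ^ cexp n i b)
      refine ⟨q ^ cexp n i b * t, mul_ne_zero (zpow_ne_zero _ hq0) ht, ?_⟩
      rw [zpow_add_one (U q i) (k : ℤ), Units.val_mul, map_mul, Module.End.mul_apply,
        rep_U, h, ← mul_assoc]
      congr 1
      rw [add_smul, one_smul]
      abel
  | pred k ih =>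
      intro b c
      obtain ⟨t, ht, h⟩ := ih (b - Pi.single i 1)
        (c * q ^ (-cexp n i (b - Pi.single i 1)))
      refine ⟨q ^ (-cexp n i (b - Pi.single i 1)) * t,
        mul_ne_zero (zpow_ne_zero _ hq0) ht, ?_⟩
      rw [zpow_sub_one (U q i) (-(k : ℤ)), Units.val_mul, map_mul, Module.End.mul_apply,
        rep_Uinv, h, ← mul_assoc]
      congr 1
      rw [sub_smul, one_smul, sub_eq_add_neg b (Pi.single i 1)]
      abel

lemma rep_Zu : ∀ (L : List (Fin n)) (a b : Fin n → ℤ) (c : K), ∃ t : K, t ≠ 0 ∧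
    rep q hq0 (↑(Zu q L a)) (Finsupp.single b c) =
      Finsupp.single (b + (L.map fun j => a j • Pi.single j 1).sum) (c * t) := by
  intro L
  induction L with
  | nil =>
      intro a b c
      refine ⟨1, one_ne_zero, ?_⟩
      rw [Zu_nil, Units.val_one, map_one, Module.End.one_apply, List.map_nil,
        List.sum_nil, add_zero, mul_one]
  | cons j L ih =>
      intro a b c
      obtain ⟨t1, ht1, h1⟩ := ih a b c
      obtain ⟨t2, ht2, h2⟩ := rep_U_zpow q hq0 j (a j)
        (b + (L.map fun j => a j • Pi.single j 1).sum) (c * t1)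
      refine ⟨t1 * t2, mul_ne_zero ht1 ht2, ?_⟩
      rw [Zu_cons, Units.val_mul, map_mul, Module.End.mul_apply, h1, h2, ← mul_assoc,
        List.map_cons, List.sum_cons]
      congr 1
      abel

/-- the ordered monomials `z^a` in the quantum torus -/
def Zmon (a : Fin n → ℤ) : QTorus K n q := ↑(Zu q (List.finRange n) a)

lemma list_sum_single (a : Fin n → ℤ) :
    ((List.finRange n).map fun j => a j • Pi.single j 1).sum = a := by
  rw [← Fin.sum_univ_def]
  have : ∀ j : Fin n, a j • (Pi.single j 1 : Fin n → ℤ) = Pi.single j (a j) := by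
    intro j
    rw [← Pi.single_smul, smul_eq_mul, mul_one]
  simp_rw [this]
  exact Finset.univ_sum_single a

lemma rep_Zmon (a : Fin n → ℤ) : ∃ t : K, t ≠ 0 ∧
    rep q hq0 (Zmon q a) (Finsupp.single 0 1) = Finsupp.single a t := by
  obtain ⟨t, ht, h⟩ := rep_Zu q hq0 (List.finRange n) a 0 1
  refine ⟨t, ht, ?_⟩
  rw [Zmon, h, list_sum_single, zero_add, one_mul]

lemma Zmon_li (hq0 : q ≠ 0) : LinearIndependent K (Zmon q (n := n)) := by
  rw [linearIndependent_iff]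
  intro l hl
  choose t ht hrep using fun a => rep_Zmon q hq0 a
  have h2 : (rep q hq0 (Finsupp.linearCombination K (Zmon q) l)) (Finsupp.single 0 1) = 0 := by
    rw [hl, map_zero, LinearMap.zero_apply]
  rw [Finsupp.linearCombination_apply, Finsupp.sum, map_sum, LinearMap.sum_apply] at h2
  have h3 : ∀ a ∈ l.support,
      (rep q hq0 (l a • Zmon q a)) (Finsupp.single 0 1) = Finsupp.single a (l a * t a) := by
    intro a _
    rw [map_smul, LinearMap.smul_apply, hrep, Finsupp.smul_single, smul_eq_mul]
  rw [Finset.sum_congr rfl h3] at h2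
  ext b
  by_cases hb : b ∈ l.support
  · have h4 := DFunLike.congr_fun h2 b
    rw [Finsupp.coe_zero, Pi.zero_apply, Finset.sum_apply'] at h4
    have h5 : ∀ a ∈ l.support,
        (Finsupp.single a (l a * t a)) b = if a = b then l a * t a else 0 :=
      fun a _ => Finsupp.single_apply
    rw [Finset.sum_congr rfl h5, Finset.sum_ite_eq' l.support b, if_pos hb] at h4
    rcases mul_eq_zero.mp h4 with h | h
    · rw [h, Finsupp.coe_zero, Pi.zero_apply]
    · exact absurd h (ht b)
  · rw [Finsupp.notMem_support_iff.mp hb, Finsupp.coe_zero, Pi.zero_apply]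

end action

section span
variable (q : K)

lemma Zmon_zero : Zmon q (0 : Fin n → ℤ) = 1 := by
  rw [Zmon, Zu_zero, Units.val_one]

lemma Zmon_mul (hq0 : q ≠ 0) (a b : Fin n → ℤ) : ∃ s : K, s ≠ 0 ∧
    Zmon q a * Zmon q b = s • Zmon q (a + b) := by
  obtain ⟨s, hs, h⟩ := Zu_mul q hq0 (List.finRange n) a b
  exact ⟨s, hs, h⟩

lemma Zmon_span (hq0 : q ≠ 0) :
    ⊤ ≤ Submodule.span K (Set.range (Zmon q (n := n))) := by
  have key : Submodule.span K (Set.range (Zmon q (n := n))) *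
      Submodule.span K (Set.range (Zmon q (n := n))) ≤
      Submodule.span K (Set.range (Zmon q (n := n))) := by
    rw [Submodule.span_mul_span]
    refine Submodule.span_le.mpr ?_
    rintro _ ⟨u, ⟨a1, rfl⟩, v, ⟨a2, rfl⟩, rfl⟩
    obtain ⟨s, hs, h⟩ := Zmon_mul q hq0 a1 a2
    rw [SetLike.mem_coe]
    show Zmon q a1 * Zmon q a2 ∈ _
    rw [h]
    exact Submodule.smul_mem _ _ (Submodule.subset_span ⟨a1 + a2, rfl⟩)
  intro x hx
  clear hx
  obtain ⟨y, rfl⟩ := RingQuot.mkAlgHom_surjective K (TorRel K n q) x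
  induction y using FreeAlgebra.induction with
  | grade0 r =>
      rw [AlgHom.commutes, Algebra.algebraMap_eq_smul_one]
      exact Submodule.smul_mem _ _
        (Submodule.subset_span ⟨0, Zmon_zero q⟩)
  | grade1 x =>
      rcases x with i | i
      · refine Submodule.subset_span ⟨Pi.single i 1, ?_⟩
        rw [Zmon, Zu_single q i 1 (List.finRange n) (List.nodup_finRange n)
          (List.mem_finRange i), zpow_one]
        rfl
      · refine Submodule.subset_span ⟨Pi.single i (-1), ?_⟩
        rw [Zmon, Zu_single q i (-1) (List.finRange n) (List.nodup_finRange n)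
          (List.mem_finRange i), zpow_neg_one]
        rfl
  | mul a b ha hb =>
      rw [map_mul]
      exact key (Submodule.mul_mem_mul ha hb)
  | add a b ha hb =>
      rw [map_add]
      exact Submodule.add_mem _ ha hb

end span

section nondeg

lemma nondeg (hn : 2 ≤ n) (he : Even n) (v : Fin n → ℤ)
    (hv : ∀ k : Fin n, ∑ j : Fin n, Eexp n k j * v j = 0) : v = 0 := by
  have hn2 := Nat.even_iff.mp he
  have hodd : ∀ k : Fin n, Odd k.1 →
      ∑ j : Fin n, (if j.1 < k.1 ∧ Even j.1 then v j else 0) = 0 := by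
    intro k hk
    have hk' := Nat.odd_iff.mp hk
    have e : ∀ j : Fin n, Eexp n k j * v j =
        -(if j.1 < k.1 ∧ Even j.1 then v j else 0) := by
      intro j
      unfold Eexp
      simp only [Nat.even_iff, Nat.odd_iff]
      split_ifs <;> omega
    have h := hv k
    rw [Finset.sum_congr rfl (fun j _ => e j), Finset.sum_neg_distrib,
      neg_eq_zero] at h
    exact h
  have heven : ∀ k : Fin n, Even k.1 →
      ∑ j : Fin n, (if k.1 < j.1 ∧ Odd j.1 then v j else 0) = 0 := by
    intro k hk
    have hk' := Nat.even_iff.mp hk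
    have e : ∀ j : Fin n, Eexp n k j * v j =
        (if k.1 < j.1 ∧ Odd j.1 then v j else 0) := by
      intro j
      unfold Eexp
      simp only [Nat.even_iff, Nat.odd_iff]
      split_ifs <;> omega
    have h := hv k
    rw [Finset.sum_congr rfl (fun j _ => e j)] at h
    exact h
  funext j
  rw [Pi.zero_apply]
  rcases Nat.even_or_odd j.1 with hj | hj
  · -- even entry
    have hj' := Nat.even_iff.mp hj
    have hjn := j.2
    have hj1 : j.1 + 1 < n := by omega
    have hA := hodd ⟨j.1 + 1, hj1⟩ (Nat.odd_iff.mpr (show (j.1 + 1) % 2 = 1 by omega))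
    have hB : ∑ m : Fin n, (if m.1 < j.1 - 1 ∧ Even m.1 then v m else 0) = 0 := by
      by_cases h0 : j.1 = 0
      · refine Finset.sum_eq_zero fun m _ => ?_
        exact if_neg (fun hc => by omega)
      · exact hodd ⟨j.1 - 1, by omega⟩ (Nat.odd_iff.mpr (show (j.1 - 1) % 2 = 1 by omega))
    have key : ∀ m : Fin n,
        (if m.1 < j.1 + 1 ∧ Even m.1 then v m else 0)
          - (if m.1 < j.1 - 1 ∧ Even m.1 then v m else 0)
        = if m = j then v m else 0 := by
      intro m
      by_cases hm : m = j
      · subst hm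
        rw [if_pos rfl, if_pos ⟨by omega, hj⟩, if_neg (fun hc => by omega), sub_zero]
      · have hmj : m.1 ≠ j.1 := fun hh => hm (Fin.ext hh)
        rw [if_neg hm]
        by_cases hem : Even m.1
        · have hem' := Nat.even_iff.mp hem
          by_cases hlt : m.1 < j.1 - 1
          · rw [if_pos ⟨by omega, hem⟩, if_pos ⟨hlt, hem⟩, sub_self]
          · rw [if_neg (fun hc => hlt (by omega)), if_neg (fun hc => hlt hc.1),
              sub_self]
        · rw [if_neg (fun hc => hem hc.2), if_neg (fun hc => hem hc.2), sub_self]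
    calc v j = ∑ m : Fin n, (if m = j then v m else 0) := by
          rw [Finset.sum_ite_eq' Finset.univ j (fun m => v m),
            if_pos (Finset.mem_univ j)]
    _ = ∑ m : Fin n, ((if m.1 < j.1 + 1 ∧ Even m.1 then v m else 0)
          - (if m.1 < j.1 - 1 ∧ Even m.1 then v m else 0)) :=
          (Finset.sum_congr rfl fun m _ => (key m).symm)
    _ = 0 := by rw [Finset.sum_sub_distrib, hA, hB, sub_zero]
  · -- odd entry
    have hj' := Nat.odd_iff.mp hj
    have hjn := j.2
    have hA := heven ⟨j.1 - 1, by omega⟩ (Nat.even_iff.mpr (show (j.1 - 1) % 2 = 0 by omega))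
    have hB : ∑ m : Fin n, (if j.1 + 1 < m.1 ∧ Odd m.1 then v m else 0) = 0 := by
      by_cases h0 : j.1 + 1 < n
      · exact heven ⟨j.1 + 1, h0⟩ (Nat.even_iff.mpr (show (j.1 + 1) % 2 = 0 by omega))
      · refine Finset.sum_eq_zero fun m _ => ?_
        exact if_neg (fun hc => by have := m.2; omega)
    have key : ∀ m : Fin n,
        (if j.1 - 1 < m.1 ∧ Odd m.1 then v m else 0)
          - (if j.1 + 1 < m.1 ∧ Odd m.1 then v m else 0)
        = if m = j then v m else 0 := by
      intro m
      by_cases hm : m = j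
      · subst hm
        rw [if_pos rfl, if_pos ⟨by omega, hj⟩, if_neg (fun hc => by omega), sub_zero]
      · have hmj : m.1 ≠ j.1 := fun hh => hm (Fin.ext hh)
        rw [if_neg hm]
        by_cases hom : Odd m.1
        · have hom' := Nat.odd_iff.mp hom
          by_cases hlt : j.1 + 1 < m.1
          · rw [if_pos ⟨by omega, hom⟩, if_pos ⟨hlt, hom⟩, sub_self]
          · rw [if_neg (fun hc => hlt (by omega)), if_neg (fun hc => hlt hc.1),
              sub_self]
        · rw [if_neg (fun hc => hom hc.2), if_neg (fun hc => hom hc.2), sub_self]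
    calc v j = ∑ m : Fin n, (if m = j then v m else 0) := by
          rw [Finset.sum_ite_eq' Finset.univ j (fun m => v m),
            if_pos (Finset.mem_univ j)]
    _ = ∑ m : Fin n, ((if j.1 - 1 < m.1 ∧ Odd m.1 then v m else 0)
          - (if j.1 + 1 < m.1 ∧ Odd m.1 then v m else 0)) :=
          (Finset.sum_congr rfl fun m _ => (key m).symm)
    _ = 0 := by rw [Finset.sum_sub_distrib, hA, hB, sub_zero]

end nondeg

section conj
variable (q : K)

lemma conj_Zmon (hq0 : q ≠ 0) (k : Fin n) (a : Fin n → ℤ) :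
    (↑(U q k) : QTorus K n q) * Zmon q a * ↑(U q k)⁻¹ =
      q ^ row k (List.finRange n) a • Zmon q a := by
  rw [Zmon, U_swap q hq0 k (List.finRange n) a, smul_mul_assoc,
    Units.mul_inv_cancel_right]

lemma row_univ (k : Fin n) (v : Fin n → ℤ) :
    row k (List.finRange n) v = ∑ j : Fin n, Eexp n k j * v j :=
  (Fin.sum_univ_def _).symm

end conj

end QT

theorem stmt8' (K : Type) [Field K] (n : ℕ) (hn : 2 ≤ n) (q : K)
    (hq0 : q ≠ 0) (hq : ∀ k : ℕ, 0 < k → q ^ k ≠ 1) (he : Even n) :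
    IsSimpleRing (QTorus K n q) := by
  classical
  have li := QT.Zmon_li (n := n) q hq0
  have sp := QT.Zmon_span (n := n) q hq0
  let bas : Module.Basis (Fin n → ℤ) K (QTorus K n q) := Module.Basis.mk li sp
  have hbas : ⇑bas = QT.Zmon q := Module.Basis.coe_mk li sp
  haveI : Nontrivial (QTorus K n q) := nontrivial_of_ne 1 0 (by
    rw [← QT.Zmon_zero q]; exact li.ne_zero 0)
  haveI hnt : Nontrivial (TwoSidedIdeal (QTorus K n q)) := ⟨⊥, ⊤, fun h => by
    have h1 : (1 : QTorus K n q) ∈ (⊥ : TwoSidedIdeal (QTorus K n q)) := h ▸ trivial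
    exact one_ne_zero ((TwoSidedIdeal.mem_bot _).mp h1)⟩
  refine ⟨{ eq_bot_or_eq_top := ?_ }⟩
  intro I
  by_cases hIbot : I = ⊥
  · left; exact hIbot
  right
  have hex : ∃ x, x ∈ I ∧ x ≠ 0 := by
    by_contra hcon
    push_neg at hcon
    apply hIbot
    refine le_antisymm ?_ bot_le
    rw [TwoSidedIdeal.le_iff]
    intro z hz
    exact (TwoSidedIdeal.mem_bot _).mpr (hcon z hz)
  obtain ⟨x0, hx0I, hx00⟩ := hex
  have hPex : ∃ m : ℕ, ∃ x, x ∈ I ∧ x ≠ 0 ∧ (bas.repr x).support.card = m :=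
    ⟨_, x0, hx0I, hx00, rfl⟩
  obtain ⟨x, hxI, hx0, hcard⟩ := Nat.find_spec hPex
  set c := bas.repr x with hc
  have hcne : c ≠ 0 := fun h => hx0 (by
    have h2 := congrArg bas.repr.symm h
    rwa [LinearEquiv.symm_apply_apply, map_zero] at h2)
  have hsupp : c.support.Nonempty := Finsupp.support_nonempty_iff.mpr hcne
  by_cases hone : c.support.card = 1
  · -- x is a nonzero multiple of a monomial, which is invertible
    obtain ⟨a, ha⟩ := Finset.card_eq_one.mp hone
    have hxa : x = c a • QT.Zmon q a := by
      have h1 := bas.linearCombination_repr x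
      rw [Finsupp.linearCombination_apply, Finsupp.sum, ← hc, ha,
        Finset.sum_singleton, hbas] at h1
      exact h1.symm
    have hca : c a ≠ 0 := Finsupp.mem_support_iff.mp (by
      rw [ha]; exact Finset.mem_singleton_self a)
    have h1I : (1 : QTorus K n q) ∈ I := by
      have h2 : ((c a)⁻¹ • (↑(QT.Zu q (List.finRange n) a)⁻¹ * x) : QTorus K n q) = 1 := by
        rw [hxa, mul_smul_comm,
          show (↑(QT.Zu q (List.finRange n) a)⁻¹ * QT.Zmon q a : QTorus K n q) = 1 from by
            rw [QT.Zmon]; exact Units.inv_mul _,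
          smul_smul, inv_mul_cancel₀ hca, one_smul]
      rw [← h2, Algebra.smul_def]
      exact I.mul_mem_left _ _ (I.mul_mem_left _ _ hxI)
    apply le_antisymm le_top
    rw [TwoSidedIdeal.le_iff]
    intro z _
    have hz := I.mul_mem_left z 1 h1I
    rwa [mul_one] at hz
  · exfalso
    have h2 : 1 < c.support.card := by
      have h3 : 0 < c.support.card := Finset.card_pos.mpr hsupp
      omega
    obtain ⟨a, haS, b, hbS, hab⟩ := Finset.one_lt_card.mp h2
    have hk : ∃ k : Fin n,
        QT.row k (List.finRange n) a ≠ QT.row k (List.finRange n) b := by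
      by_contra hcon
      push_neg at hcon
      have hvz : ∀ k : Fin n, ∑ j : Fin n, QT.Eexp n k j * (a - b) j = 0 := by
        intro k
        have h4 := hcon k
        rw [QT.row_univ, QT.row_univ] at h4
        have h5 : ∀ j : Fin n, QT.Eexp n k j * (a - b) j =
            QT.Eexp n k j * a j - QT.Eexp n k j * b j := by
          intro j; rw [Pi.sub_apply, mul_sub]
        rw [Finset.sum_congr rfl fun j _ => h5 j, Finset.sum_sub_distrib, h4, sub_self]
      have h6 := QT.nondeg hn he (a - b) hvz
      exact hab (by rwa [sub_eq_zero] at h6)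
    obtain ⟨k, hkne⟩ := hk
    set rb : ℤ := QT.row k (List.finRange n) b with hrb
    set y : QTorus K n q := ↑(QT.U q k) * x * ↑(QT.U q k)⁻¹ - q ^ rb • x with hy
    have hyI : y ∈ I := by
      apply I.sub_mem
      · exact I.mul_mem_right _ _ (I.mul_mem_left _ _ hxI)
      · rw [Algebra.smul_def]; exact I.mul_mem_left _ _ hxI
    have hxsum : x = c.sum fun a' t => t • QT.Zmon q a' := by
      have h1 := bas.linearCombination_repr x
      rw [Finsupp.linearCombination_apply, ← hc] at h1
      rw [← h1]
      exact Finsupp.sum_congr fun a' _ => by rw [hbas]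
    have hyval : y = c.sum fun a' t =>
        (t * (q ^ QT.row k (List.finRange n) a' - q ^ rb)) • QT.Zmon q a' := by
      rw [hy]
      conv_lhs => rw [hxsum]
      rw [Finsupp.mul_sum, Finsupp.sum_mul, Finsupp.smul_sum, ← Finsupp.sum_sub]
      refine Finsupp.sum_congr fun a' _ => ?_
      rw [mul_smul_comm, smul_mul_assoc, QT.conj_Zmon q hq0 k a', smul_smul, smul_smul,
        ← sub_smul]
      congr 1
      ring
    have hrepr : bas.repr y = c.sum fun a' t =>
        Finsupp.single a' (t * (q ^ QT.row k (List.finRange n) a' - q ^ rb)) := by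
      rw [hyval, map_finsuppSum]
      refine Finsupp.sum_congr fun a' _ => ?_
      rw [map_smul, ← hbas, bas.repr_self, Finsupp.smul_single, smul_eq_mul, mul_one]
    have hlp : ∀ p, bas.repr y p =
        if p ∈ c.support then c p * (q ^ QT.row k (List.finRange n) p - q ^ rb)
        else 0 := by
      intro p
      rw [hrepr, Finsupp.sum_apply]
      have e1 : (c.sum fun a₁ t =>
          (Finsupp.single a₁ (t * (q ^ QT.row k (List.finRange n) a₁ - q ^ rb))) p)
          = c.sum fun a₁ t =>
            if a₁ = p then t * (q ^ QT.row k (List.finRange n) a₁ - q ^ rb) else 0 :=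
        Finsupp.sum_congr fun a₁ _ => Finsupp.single_apply
      rw [e1, Finsupp.sum_ite_eq' c p
        (fun a₁ t => t * (q ^ QT.row k (List.finRange n) a₁ - q ^ rb))]
    have hlb : bas.repr y b = 0 := by rw [hlp b, if_pos hbS, sub_self, mul_zero]
    have hla : bas.repr y a ≠ 0 := by
      rw [hlp a, if_pos haS]
      refine mul_ne_zero (Finsupp.mem_support_iff.mp haS) (sub_ne_zero.mpr ?_)
      intro hqq
      exact hkne (QT.zpow_inj q hq0 hq hqq)
    have hy0 : y ≠ 0 := fun h => hla (by rw [h, map_zero, Finsupp.zero_apply])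
    have hsub : (bas.repr y).support ⊂ c.support := by
      rw [Finset.ssubset_iff_of_subset]
      · exact ⟨b, hbS, fun hb => (Finsupp.mem_support_iff.mp hb) hlb⟩
      · intro p hp
        by_contra hpc
        exact (Finsupp.mem_support_iff.mp hp) (by rw [hlp p, if_neg hpc])
    have hcard2 : (bas.repr y).support.card < Nat.find hPex := by
      rw [← hcard]; exact Finset.card_lt_card hsub
    exact Nat.find_min hPex hcard2 ⟨y, hyI, hy0, rfl⟩

/-- Lemma 3.7 (even case): if `q` is not a root of unity and `n` is even, then the
quantum torus `T_n^q` is a simple ring. -/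
theorem stmt8 (K : Type) [Field K] [IsAlgClosed K] (n : ℕ) (hn : 2 ≤ n) (q : K)
    (hq0 : q ≠ 0) (hq : ∀ k : ℕ, 0 < k → q ^ k ≠ 1) (he : Even n) :
    IsSimpleRing (QTorus K n q) := stmt8' K n hn q hq0 hq he

end
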